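/- Let S = {g_1, ..., g_m} be a proper (n, m, t)-nested divisible difference set for G relative to (A, Lambda) with t >= 2, A = {A_0, A_1, ..., A_t} and Lambda = {lambda_1, ..., lambda_t}, and let s in {1, ..., t-1} be the smallest integer with lambda_s != lambda_{s+1}. Set alpha_1 = sqrt(1/m - lambda_1/m^2) and alpha_2 = sqrt(alpha_1^2 + (lambda_s - lambda_{s+1})*|A_s|/m^2). If F is the G-harmonic frame generated by S, then: (1) alpha_1 and alpha_2 both occur among the frame angles of F; and (2) F is biangular if and only if for every r in {s+1, ..., t-1}, either sum_{j=s}^{r} (lambda_j - lambda_{j+1})*|A_j| = 0 or sum_{j=s+1}^{r} (lambda_j - lambda_{j+1})*|A_j| = 0. -/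

import Mathlib

open Finset

/-- The underlying finite abelian group `G = ZMod n₁ ⊕ ... ⊕ ZMod n_k`
(a fixed cyclic decomposition). -/
abbrev PiG {k : ℕ} (nn : Fin k → ℕ) : Type := ∀ i, ZMod (nn i)

/-- The character `ρ_x(y) = exp(2πi (x(1)y(1)/n₁ + ... + x(k)y(k)/n_k))`. -/
noncomputable def rho {k : ℕ} (nn : Fin k → ℕ) (x y : PiG nn) : ℂ :=
  Complex.exp (2 * (Real.pi : ℂ) * Complex.I *
    ∑ i, ((x i).val : ℂ) * ((y i).val : ℂ) / ((nn i : ℕ) : ℂ))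

/-- The vector `f_x = (1/√m) (ρ_{g_j}(x))_{j=1}^m` of the `G`-harmonic frame
generated by `S = {g_1, ..., g_m}`. -/
noncomputable def harm {k m : ℕ} (nn : Fin k → ℕ) (g : Fin m → PiG nn) (x : PiG nn) :
    EuclideanSpace ℂ (Fin m) :=
  (WithLp.equiv 2 (Fin m → ℂ)).symm fun j => ((Real.sqrt m : ℝ) : ℂ)⁻¹ * rho nn (g j) x

/-- The frame angle `|⟨f_x, f_y⟩|`. -/
noncomputable def ang {k m : ℕ} (nn : Fin k → ℕ) (g : Fin m → PiG nn) (x y : PiG nn) : ℝ :=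
  ‖(inner ℂ (harm nn g x) (harm nn g y) : ℂ)‖

/-- The set of frame angles `Θ = { |⟨f_x, f_y⟩| : x ≠ y }` of the harmonic frame. -/
noncomputable def anglesSet {k m : ℕ} (nn : Fin k → ℕ) (g : Fin m → PiG nn) : Set ℝ :=
  {r : ℝ | ∃ x y : PiG nn, x ≠ y ∧ ang nn g x y = r}

/-- The harmonic frame is a tight frame (with the forced constant `n/m`):
`∑_x f_x ⊗ f_x^* = (n/m) I_m` as operators. -/
noncomputable def IsTightHarm {k m : ℕ} (nn : Fin k → ℕ) [∀ i, NeZero (nn i)]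
    (g : Fin m → PiG nn) : Prop :=
  ∀ v : EuclideanSpace ℂ (Fin m),
    ∑ x : PiG nn, (inner ℂ (harm nn g x) v : ℂ) • harm nn g x =
      ((Fintype.card (PiG nn) : ℂ) / (m : ℂ)) • v

/-- `diffCount g x` is the number of ways to write `x = g_a - g_b` with `g_a ≠ g_b`
distinct elements of `S = {g_1, ..., g_m}`. -/
noncomputable def diffCount {G : Type*} [AddCommGroup G] {m : ℕ} (g : Fin m → G) (x : G) : ℕ :=
  Nat.card {p : Fin m × Fin m // p.1 ≠ p.2 ∧ g p.1 - g p.2 = x}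

/-- `S = {g_1, ..., g_m}` is an `(n, m, t)`-nested difference set for `G` relative to
`(A, Λ)`: `A 0 = {0}`, `A t = G`, the `A j` are increasing, and every element of
`A (j+1) \ A j` is a difference of distinct elements of `S` in exactly `Λ (j+1)` ways. -/
def IsNestedDS {G : Type*} [AddCommGroup G] {m : ℕ} (g : Fin m → G) (t : ℕ)
    (A : ℕ → Set G) (lam : ℕ → ℕ) : Prop :=
  A 0 = {0} ∧ A t = Set.univ ∧ (∀ j, j < t → A j ⊆ A (j + 1)) ∧
    (∀ j, j < t → ∀ x ∈ A (j + 1), x ∉ A j → diffCount g x = lam (j + 1))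

set_option linter.unusedSectionVars false
set_option linter.unusedVariables false
set_option linter.unusedTactic false

open Complex

section Aux
variable {k : ℕ} {nn : Fin k → ℕ} [∀ i, NeZero (nn i)]

lemma rho_comm (x y : PiG nn) : rho nn x y = rho nn y x := by
  unfold rho
  congr 2
  exact Finset.sum_congr rfl fun i _ => by ring

lemma rho_add_left (x y d : PiG nn) :
    rho nn (x + y) d = rho nn x d * rho nn y d := by
  unfold rho
  rw [← Complex.exp_add, Complex.exp_eq_exp_iff_exists_int]
  refine ⟨-((∑ i, (((x i).val + (y i).val) / nn i) * (d i).val : ℕ) : ℤ), ?_⟩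
  have key : ∀ i : Fin k, (((x + y) i).val : ℂ) * ((d i).val : ℂ) / ((nn i : ℕ) : ℂ)
      = ((x i).val : ℂ) * ((d i).val : ℂ) / ((nn i : ℕ) : ℂ)
        + ((y i).val : ℂ) * ((d i).val : ℂ) / ((nn i : ℕ) : ℂ)
        - ((((x i).val + (y i).val) / nn i : ℕ) : ℂ) * ((d i).val : ℂ) := by
    intro i
    have hn : ((nn i : ℕ) : ℂ) ≠ 0 := by
      exact_mod_cast Nat.cast_ne_zero.mpr (NeZero.ne (nn i))
    have h1 : ((x + y) i).val = ((x i).val + (y i).val) % nn i := by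
      simpa using ZMod.val_add (x i) (y i)
    have h2 : ((x i).val + (y i).val) % nn i + nn i * (((x i).val + (y i).val) / nn i)
        = (x i).val + (y i).val := Nat.mod_add_div _ _
    have h3 : (((x + y) i).val : ℂ)
        = ((x i).val : ℂ) + ((y i).val : ℂ)
          - ((nn i : ℕ) : ℂ) * ((((x i).val + (y i).val) / nn i : ℕ) : ℂ) := by
      have := congrArg (Nat.cast : ℕ → ℂ) h2
      push_cast at this ⊢
      rw [h1]
      push_cast
      linear_combination this
    rw [h3]
    field_simp
  rw [Finset.sum_congr rfl fun i _ => key i]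
  rw [Finset.sum_sub_distrib, Finset.sum_add_distrib]
  have hQ : ((∑ i, (((x i).val + (y i).val) / nn i) * (d i).val : ℕ) : ℂ)
      = ∑ i, ((((x i).val + (y i).val) / nn i : ℕ) : ℂ) * ((d i).val : ℂ) := by
    rw [Nat.cast_sum]
    exact Finset.sum_congr rfl fun i _ => by rw [Nat.cast_mul]
  rw [Int.cast_neg, Int.cast_natCast, hQ]
  ring

lemma rho_zero_left (y : PiG nn) : rho nn 0 y = 1 := by
  unfold rho
  have : ∀ i : Fin k, (((0 : PiG nn) i).val : ℂ) * ((y i).val : ℂ) / ((nn i : ℕ) : ℂ) = 0 := by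
    intro i; simp [Pi.zero_apply, ZMod.val_zero]
  rw [Finset.sum_congr rfl fun i _ => this i]
  simp

lemma rho_abs (x y : PiG nn) : ‖rho nn x y‖ = 1 := by
  unfold rho
  have h : 2 * (Real.pi : ℂ) * Complex.I * ∑ i, ((x i).val : ℂ) * ((y i).val : ℂ) / ((nn i : ℕ) : ℂ)
      = ((2 * Real.pi * ∑ i, ((x i).val : ℝ) * ((y i).val : ℝ) / ((nn i : ℕ) : ℝ) : ℝ) : ℂ)
        * Complex.I := by
    push_cast
    ring
  rw [h, Complex.norm_exp_ofReal_mul_I]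

lemma rho_add_right (x y d : PiG nn) :
    rho nn d (x + y) = rho nn d x * rho nn d y := by
  rw [rho_comm, rho_add_left, rho_comm d x, rho_comm d y]

lemma rho_zero_right (x : PiG nn) : rho nn x 0 = 1 := by
  rw [rho_comm, rho_zero_left]

lemma rho_neg_left (x d : PiG nn) : rho nn (-x) d = (rho nn x d)⁻¹ := by
  have h : rho nn (-x) d * rho nn x d = 1 := by
    rw [← rho_add_left, neg_add_cancel, rho_zero_left]
  exact eq_inv_of_mul_eq_one_left h

lemma rho_conj (x d : PiG nn) : (starRingEnd ℂ) (rho nn x d) = rho nn (-x) d := by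
  rw [rho_neg_left, ← Complex.inv_eq_conj (rho_abs x d)]

lemma rho_conj_mul (a x y : PiG nn) :
    (starRingEnd ℂ) (rho nn a x) * rho nn a y = rho nn a (y - x) := by
  rw [rho_comm a x, rho_conj, rho_comm (-x) a, ← rho_add_right, sub_eq_add_neg, add_comm]

end Aux

section Sums
open scoped Classical
variable {k : ℕ} {nn : Fin k → ℕ} [∀ i, NeZero (nn i)]

lemma exists_rho_ne_one {z : PiG nn} (hz : z ≠ 0) : ∃ d : PiG nn, rho nn z d ≠ 1 := by
  obtain ⟨i, hi⟩ : ∃ i, z i ≠ 0 := by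
    by_contra h
    push_neg at h
    exact hz (funext h)
  have hn1 : 1 < nn i := by
    by_contra h
    push_neg at h
    have hcard : Fintype.card (ZMod (nn i)) ≤ 1 := by rw [ZMod.card]; omega
    haveI := Fintype.card_le_one_iff_subsingleton.mp hcard
    exact hi (Subsingleton.elim _ _)
  refine ⟨Pi.single i 1, ?_⟩
  have hv : 0 < (z i).val := by
    rcases Nat.eq_zero_or_pos (z i).val with h | h
    · exact absurd ((ZMod.val_eq_zero _).mp h) hi
    · exact h
  have hvn : (z i).val < nn i := ZMod.val_lt (z i)
  have hsum : ∑ j, ((z j).val : ℂ) * (((Pi.single i 1 : PiG nn) j).val : ℂ) / ((nn j : ℕ) : ℂ)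
      = ((z i).val : ℂ) / ((nn i : ℕ) : ℂ) := by
    rw [Finset.sum_eq_single i]
    · rw [Pi.single_eq_same, ZMod.val_one_eq_one_mod]
      rw [Nat.mod_eq_of_lt hn1]
      push_cast
      ring
    · intro j _ hj
      rw [Pi.single_eq_of_ne hj]
      simp [ZMod.val_zero]
    · intro h
      exact absurd (Finset.mem_univ i) h
  unfold rho
  rw [hsum]
  intro hone
  rw [Complex.exp_eq_one_iff] at hone
  obtain ⟨q, hq⟩ := hone
  have h2pi : (2 * (Real.pi : ℂ) * Complex.I) ≠ 0 := by
    simp [Real.pi_ne_zero, Complex.I_ne_zero]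
  have hq' : ((z i).val : ℂ) / ((nn i : ℕ) : ℂ) = (q : ℂ) := by
    have : 2 * (Real.pi : ℂ) * Complex.I * (((z i).val : ℂ) / ((nn i : ℕ) : ℂ))
        = 2 * (Real.pi : ℂ) * Complex.I * (q : ℂ) := by
      rw [hq]; ring
    exact mul_left_cancel₀ h2pi this
  have hr : ((z i).val : ℝ) / ((nn i : ℕ) : ℝ) = (q : ℝ) := by
    apply Complex.ofReal_injective
    push_cast
    exact_mod_cast hq'
  have h0 : (0 : ℝ) < ((z i).val : ℝ) / ((nn i : ℕ) : ℝ) := by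
    apply div_pos <;> [exact_mod_cast hv; exact_mod_cast (Nat.pos_of_ne_zero (NeZero.ne (nn i)))]
  have h1 : ((z i).val : ℝ) / ((nn i : ℕ) : ℝ) < 1 := by
    rw [div_lt_one (by exact_mod_cast Nat.pos_of_ne_zero (NeZero.ne (nn i)))]
    exact_mod_cast hvn
  rw [hr] at h0 h1
  have : (0 : ℤ) < q := by exact_mod_cast h0
  have : (1 : ℤ) ≤ q := this
  have : (1 : ℝ) ≤ (q : ℝ) := by exact_mod_cast this
  linarith

lemma sum_rho_right {z : PiG nn} (hz : z ≠ 0) : ∑ d : PiG nn, rho nn z d = 0 := by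
  obtain ⟨d0, hd0⟩ := exists_rho_ne_one hz
  have h : rho nn z d0 * ∑ d : PiG nn, rho nn z d = ∑ d : PiG nn, rho nn z d := by
    rw [Finset.mul_sum]
    refine Fintype.sum_equiv (Equiv.addLeft d0) _ _ fun d => ?_
    rw [← rho_add_right]
    rfl
  have h2 : (rho nn z d0 - 1) * ∑ d : PiG nn, rho nn z d = 0 := by
    rw [sub_mul, one_mul, h, sub_self]
  rcases mul_eq_zero.mp h2 with h3 | h3
  · exact absurd (by linear_combination h3) hd0
  · exact h3

lemma sum_rho_left {d : PiG nn} (hd : d ≠ 0) : ∑ z : PiG nn, rho nn z d = 0 := by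
  rw [Finset.sum_congr rfl fun z _ => rho_comm z d]
  exact sum_rho_right hd

/-- annihilator of a subgroup as a Finset -/
noncomputable def annF (nn : Fin k → ℕ) [∀ i, NeZero (nn i)] (H : AddSubgroup (PiG nn)) :
    Finset (PiG nn) :=
  Finset.univ.filter (fun d => ∀ z ∈ H, rho nn z d = 1)

lemma mem_annF {H : AddSubgroup (PiG nn)} {d : PiG nn} :
    d ∈ annF nn H ↔ ∀ z ∈ H, rho nn z d = 1 := by
  simp [annF]

lemma zero_mem_annF (H : AddSubgroup (PiG nn)) : (0 : PiG nn) ∈ annF nn H :=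
  mem_annF.mpr fun z _ => rho_zero_right z

lemma annF_anti {H K : AddSubgroup (PiG nn)} (h : H ≤ K) : annF nn K ⊆ annF nn H := by
  intro d hd
  exact mem_annF.mpr fun z hz => mem_annF.mp hd z (h hz)

lemma sum_rho_subgroup (H : AddSubgroup (PiG nn)) (d : PiG nn) :
    ∑ z : H, rho nn (z : PiG nn) d
      = if d ∈ annF nn H then (Nat.card H : ℂ) else 0 := by
  by_cases hd : d ∈ annF nn H
  · rw [if_pos hd]
    have h1 : ∀ z : H, rho nn (z : PiG nn) d = 1 := fun z => mem_annF.mp hd z z.2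
    simp [h1, Nat.card_eq_fintype_card]
  · rw [if_neg hd]
    rw [mem_annF] at hd
    push_neg at hd
    obtain ⟨z0, hz0, hz0'⟩ := hd
    have h : rho nn z0 d * ∑ z : H, rho nn (z : PiG nn) d = ∑ z : H, rho nn (z : PiG nn) d := by
      rw [Finset.mul_sum]
      refine Fintype.sum_equiv (Equiv.addLeft (⟨z0, hz0⟩ : H)) _ _ fun z => ?_
      rw [← rho_add_left]
      rfl
    have h2 : (rho nn z0 d - 1) * ∑ z : H, rho nn (z : PiG nn) d = 0 := by
      rw [sub_mul, one_mul, h, sub_self]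
    rcases mul_eq_zero.mp h2 with h3 | h3
    · exact absurd (by linear_combination h3) hz0'
    · exact h3

lemma annF_card_mul (H : AddSubgroup (PiG nn)) :
    (annF nn H).card * Nat.card H = Fintype.card (PiG nn) := by
  have key : ∑ d : PiG nn, ∑ z : H, rho nn (z : PiG nn) d = (Fintype.card (PiG nn) : ℂ) := by
    rw [Finset.sum_comm]
    have h1 : ∀ z : H, ∑ d : PiG nn, rho nn (z : PiG nn) d
        = if (z : PiG nn) = 0 then (Fintype.card (PiG nn) : ℂ) else 0 := by
      intro z
      by_cases hz : (z : PiG nn) = 0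
      · rw [if_pos hz, hz]
        simp [rho_zero_left]
      · rw [if_neg hz]
        exact sum_rho_right hz
    rw [Finset.sum_congr rfl fun z _ => h1 z]
    have : ∀ z : H, ((z : PiG nn) = 0) = (z = (0 : H)) := by
      intro z
      simp [ZeroMemClass.coe_eq_zero]
    simp only [this]
    rw [Fintype.sum_ite_eq' (0 : H) (fun _ => (Fintype.card (PiG nn) : ℂ))]
  have key2 : ∑ d : PiG nn, ∑ z : H, rho nn (z : PiG nn) d
      = ((annF nn H).card : ℂ) * (Nat.card H : ℂ) := by
    rw [Finset.sum_congr rfl fun d _ => sum_rho_subgroup H d]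
    rw [Finset.sum_ite_mem, Finset.univ_inter, Finset.sum_const]
    simp [mul_comm]
  rw [key2] at key
  exact_mod_cast key

lemma exists_ann_diff {H K : AddSubgroup (PiG nn)} (hle : H ≤ K) (hne : H ≠ K) :
    ∃ d, d ∈ annF nn H ∧ d ∉ annF nn K := by
  have hcard : Nat.card H < Nat.card K := by
    have hss : (H : Set (PiG nn)) ⊂ (K : Set (PiG nn)) := by
      rw [Set.ssubset_iff_subset_ne]
      exact ⟨hle, fun h => hne (SetLike.coe_injective h)⟩
    rw [← SetLike.coe_sort_coe H, ← SetLike.coe_sort_coe K, Nat.card_coe_set_eq,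
      Nat.card_coe_set_eq]
    exact Set.ncard_lt_ncard hss (Set.toFinite _)
  have hsub : annF nn K ⊆ annF nn H := annF_anti hle
  have hne2 : annF nn K ≠ annF nn H := by
    intro h
    have h1 := annF_card_mul H
    have h2 := annF_card_mul K
    rw [h] at h2
    have hpos : 0 < (annF nn H).card := Finset.card_pos.mpr ⟨0, zero_mem_annF H⟩
    have : Nat.card H = Nat.card K := by
      have := h1.trans h2.symm
      exact Nat.eq_of_mul_eq_mul_left hpos this
    omega
  obtain ⟨d, hd1, hd2⟩ := Finset.exists_of_ssubset (ssubset_of_subset_of_ne hsub hne2)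
  exact ⟨d, hd1, hd2⟩

end Sums

section Frame
open scoped Classical
variable {k m : ℕ} {nn : Fin k → ℕ} [∀ i, NeZero (nn i)] (g : Fin m → PiG nn)

lemma inner_harm (hm : 0 < m) (x y : PiG nn) :
    (inner ℂ (harm nn g x) (harm nn g y) : ℂ) = ((m : ℕ) : ℂ)⁻¹ * ∑ j, rho nn (g j) (y - x) := by
  rw [PiLp.inner_apply, Finset.mul_sum]
  refine Finset.sum_congr rfl fun j _ => ?_
  have hco : ∀ z : PiG nn, harm nn g z j = ((Real.sqrt m : ℝ) : ℂ)⁻¹ * rho nn (g j) z :=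
    fun z => rfl
  rw [hco, hco]
  rw [RCLike.inner_apply]
  rw [map_mul, map_inv₀, Complex.conj_ofReal]
  have hsq : ((Real.sqrt m : ℝ) : ℂ)⁻¹ * ((Real.sqrt m : ℝ) : ℂ)⁻¹ = ((m : ℕ) : ℂ)⁻¹ := by
    rw [← mul_inv, ← Complex.ofReal_mul, Real.mul_self_sqrt (Nat.cast_nonneg m)]
    norm_num
  rw [mul_comm]
  calc (((Real.sqrt m : ℝ) : ℂ))⁻¹ * (starRingEnd ℂ) (rho nn (g j) x) *
        (((Real.sqrt m : ℝ) : ℂ)⁻¹ * rho nn (g j) y)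
      = (((Real.sqrt m : ℝ) : ℂ)⁻¹ * ((Real.sqrt m : ℝ) : ℂ)⁻¹) *
        ((starRingEnd ℂ) (rho nn (g j) x) * rho nn (g j) y) := by ring
    _ = ((m : ℕ) : ℂ)⁻¹ * rho nn (g j) (y - x) := by rw [hsq, rho_conj_mul]

lemma diffCount_eq_card (z : PiG nn) :
    diffCount g z = (Finset.univ.filter
      (fun p : Fin m × Fin m => p.1 ≠ p.2 ∧ g p.1 - g p.2 = z)).card := by
  rw [diffCount, Nat.card_eq_fintype_card, Fintype.card_subtype]

lemma diffCount_zero (hg : Function.Injective g) : diffCount g 0 = 0 := by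
  rw [diffCount_eq_card]
  rw [Finset.card_eq_zero, Finset.filter_eq_empty_iff]
  rintro p -
  rintro ⟨hne, hz⟩
  exact hne (hg (by rwa [sub_eq_zero] at hz))

lemma normSq_sum_rho (hg : Function.Injective g) (d : PiG nn) :
    ((Complex.normSq (∑ j, rho nn (g j) d) : ℝ) : ℂ)
      = (m : ℂ) + ∑ z : PiG nn, (diffCount g z : ℂ) * rho nn z d := by
  have h1 : ((Complex.normSq (∑ j, rho nn (g j) d) : ℝ) : ℂ)
      = (starRingEnd ℂ) (∑ j, rho nn (g j) d) * (∑ j, rho nn (g j) d) := by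
    rw [Complex.normSq_eq_conj_mul_self]
  rw [h1, map_sum, Finset.sum_mul_sum]
  have h2 : ∀ a b : Fin m, (starRingEnd ℂ) (rho nn (g a) d) * rho nn (g b) d
      = rho nn (g b - g a) d := by
    intro a b
    rw [rho_comm (g a) d, rho_comm (g b) d, rho_conj_mul, rho_comm]
  rw [Finset.sum_congr rfl fun a _ => Finset.sum_congr rfl fun b _ => h2 a b]
  rw [← Finset.sum_product']
  have h3 : ∑ p : Fin m × Fin m, rho nn (g p.2 - g p.1) d
      = ∑ p : Fin m × Fin m, rho nn (g p.1 - g p.2) d := by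
    refine Fintype.sum_equiv (Equiv.prodComm _ _) _ _ fun p => rfl
  rw [show (Finset.univ ×ˢ Finset.univ : Finset (Fin m × Fin m)) = Finset.univ from
    Finset.univ_product_univ]
  rw [show ∑ p : Fin m × Fin m, rho nn (g p.2 - g p.1) d
      = ∑ p : Fin m × Fin m, rho nn (g p.1 - g p.2) d from h3]
  rw [← Finset.sum_filter_add_sum_filter_not Finset.univ (fun p : Fin m × Fin m => p.1 = p.2)]
  congr 1
  · have hdiag : ∀ p ∈ Finset.univ.filter (fun p : Fin m × Fin m => p.1 = p.2),
        rho nn (g p.1 - g p.2) d = 1 := by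
      intro p hp
      rw [Finset.mem_filter] at hp
      rw [hp.2, sub_self, rho_zero_left]
    rw [Finset.sum_congr rfl hdiag, Finset.sum_const, nsmul_eq_mul, mul_one]
    norm_cast
    have : Finset.univ.filter (fun p : Fin m × Fin m => p.1 = p.2)
        = Finset.univ.diag := by
      ext p; simp [Finset.mem_diag]
    rw [this, Finset.diag_card, Finset.card_univ, Fintype.card_fin]
  · rw [← Finset.sum_fiberwise_of_maps_to
      (fun (p : Fin m × Fin m) _ => Finset.mem_univ (g p.1 - g p.2))
      (fun p => rho nn (g p.1 - g p.2) d)]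
    refine Finset.sum_congr rfl fun z _ => ?_
    have heq : ∀ p ∈ (Finset.univ.filter (fun p : Fin m × Fin m => ¬p.1 = p.2)).filter
        (fun p => g p.1 - g p.2 = z), rho nn (g p.1 - g p.2) d = rho nn z d := by
      intro p hp
      rw [Finset.mem_filter] at hp
      rw [hp.2]
    rw [Finset.sum_congr rfl heq, Finset.sum_const, nsmul_eq_mul]
    congr 1
    rw [diffCount_eq_card, Finset.filter_filter]

end Frame

section Nested
open scoped Classical
variable {k m : ℕ} {nn : Fin k → ℕ} [∀ i, NeZero (nn i)]

lemma abel_sum (f u : ℕ → ℂ) (T : ℕ) :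
    ∑ j ∈ Finset.Icc 1 (T + 1), f j * (u j - u (j - 1))
      = ∑ j ∈ Finset.Icc 1 T, (f j - f (j + 1)) * u j + f (T + 1) * u (T + 1) - f 1 * u 0 := by
  induction T with
  | zero => simp [mul_sub]
  | succ T ih =>
    rw [Finset.sum_Icc_succ_top (by omega : 1 ≤ T + 1 + 1), ih,
        Finset.sum_Icc_succ_top (by omega : 1 ≤ T + 1)]
    simp only [Nat.add_sub_cancel]
    ring

/-- partial character sum over `A j` -/
noncomputable def TT (nn : Fin k → ℕ) [∀ i, NeZero (nn i)] (A : ℕ → AddSubgroup (PiG nn))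
    (j : ℕ) (d : PiG nn) : ℂ :=
  ∑ z ∈ Finset.univ.filter (· ∈ A j), rho nn z d

lemma TT_eq (A : ℕ → AddSubgroup (PiG nn)) (j : ℕ) (d : PiG nn) :
    TT nn A j d = if d ∈ annF nn (A j) then (Nat.card (A j) : ℂ) else 0 := by
  rw [TT, ← sum_rho_subgroup (A j) d]
  exact Finset.sum_subtype _ (fun x => by simp) _

variable (g : Fin m → PiG nn) (t : ℕ) (A : ℕ → AddSubgroup (PiG nn)) (lam : ℕ → ℕ)

lemma telescope_sum (hg : Function.Injective g)
    (hnds : IsNestedDS g t (fun j => (A j : Set (PiG nn))) lam) (d : PiG nn) :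
    ∀ r, r ≤ t →
      ∑ z ∈ Finset.univ.filter (· ∈ A r), (diffCount g z : ℂ) * rho nn z d
        = ∑ j ∈ Finset.Icc 1 r, (lam j : ℂ) * (TT nn A j d - TT nn A (j - 1) d) := by
  obtain ⟨h0, hT, hmono, hcount⟩ := hnds
  intro r
  induction r with
  | zero =>
    intro _
    have hfil : Finset.univ.filter (· ∈ A 0) = {(0 : PiG nn)} := by
      ext z
      simp only [Finset.mem_filter, Finset.mem_univ, true_and, Finset.mem_singleton]
      constructor
      · intro hz
        have : z ∈ (A 0 : Set (PiG nn)) := hz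
        have h0' : (A 0 : Set (PiG nn)) = {0} := h0
        rwa [h0', Set.mem_singleton_iff] at this
      · intro hz
        subst hz
        exact (A 0).zero_mem
    rw [hfil, Finset.sum_singleton, diffCount_zero g hg]
    simp
  | succ r ih =>
    intro hr
    have hrt : r < t := by omega
    have hsub : Finset.univ.filter (· ∈ A r) ⊆ Finset.univ.filter (· ∈ A (r + 1)) := by
      intro z hz
      simp only [Finset.mem_filter, Finset.mem_univ, true_and] at hz ⊢
      exact hmono r hrt hz
    rw [← Finset.sum_sdiff hsub, ih (by omega),
        Finset.sum_Icc_succ_top (by omega : 1 ≤ r + 1)]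
    have hdiff : ∀ z ∈ Finset.univ.filter (· ∈ A (r + 1)) \ Finset.univ.filter (· ∈ A r),
        (diffCount g z : ℂ) * rho nn z d = (lam (r + 1) : ℂ) * rho nn z d := by
      intro z hz
      rw [Finset.mem_sdiff, Finset.mem_filter, Finset.mem_filter] at hz
      rw [hcount r hrt z hz.1.2 (fun hmem => hz.2 ⟨Finset.mem_univ z, hmem⟩)]
    rw [Finset.sum_congr rfl hdiff, ← Finset.mul_sum,
        Finset.sum_sdiff_eq_sub hsub]
    have : TT nn A (r + 1 - 1) d = TT nn A r d := by norm_num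
    rw [this]
    unfold TT
    ring

lemma normSq_eq_Nval (hm : 0 < m) (hg : Function.Injective g) (ht : 1 ≤ t)
    (hnds : IsNestedDS g t (fun j => (A j : Set (PiG nn))) lam)
    {d : PiG nn} (hd : d ≠ 0) :
    ((Complex.normSq (∑ j, rho nn (g j) d) : ℝ) : ℂ)
      = (((m : ℤ) - lam 1 + ∑ j ∈ Finset.Icc 1 (t - 1), ((lam j : ℤ) - lam (j + 1)) *
          (if d ∈ annF nn (A j) then (Nat.card (A j) : ℤ) else 0) : ℤ) : ℂ) := by
  have hTt : TT nn A t d = 0 := by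
    rw [TT]
    have : Finset.univ.filter (· ∈ A t) = Finset.univ := by
      ext z
      simp only [Finset.mem_filter, Finset.mem_univ, true_and, iff_true]
      have hT' : (A t : Set (PiG nn)) = Set.univ := hnds.2.1
      have : z ∈ (A t : Set (PiG nn)) := by rw [hT']; trivial
      exact this
    rw [this]
    exact sum_rho_left hd
  have hT0 : TT nn A 0 d = 1 := by
    rw [TT]
    have hfil : Finset.univ.filter (· ∈ A 0) = {(0 : PiG nn)} := by
      ext z
      simp only [Finset.mem_filter, Finset.mem_univ, true_and, Finset.mem_singleton]
      constructor
      · intro hz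
        have : z ∈ (A 0 : Set (PiG nn)) := hz
        have h0' : (A 0 : Set (PiG nn)) = {0} := hnds.1
        rwa [h0', Set.mem_singleton_iff] at this
      · intro hz
        subst hz
        exact (A 0).zero_mem
    rw [hfil, Finset.sum_singleton, rho_zero_left]
  have hfull : ∑ z : PiG nn, (diffCount g z : ℂ) * rho nn z d
      = ∑ j ∈ Finset.Icc 1 t, (lam j : ℂ) * (TT nn A j d - TT nn A (j - 1) d) := by
    rw [← telescope_sum g t A lam hg hnds d t le_rfl]
    have : Finset.univ.filter (· ∈ A t) = Finset.univ := by
      ext z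
      simp only [Finset.mem_filter, Finset.mem_univ, true_and, iff_true]
      have hT' : (A t : Set (PiG nn)) = Set.univ := hnds.2.1
      have : z ∈ (A t : Set (PiG nn)) := by rw [hT']; trivial
      exact this
    rw [this]
  rw [normSq_sum_rho g hg d, hfull]
  have ht' : t - 1 + 1 = t := by omega
  have habel := abel_sum (fun j => (lam j : ℂ)) (fun j => TT nn A j d) (t - 1)
  rw [ht'] at habel
  rw [habel, hTt, hT0]
  have hTTs : ∀ j ∈ Finset.Icc 1 (t - 1),
      ((lam j : ℂ) - (lam (j + 1) : ℂ)) * TT nn A j d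
       = ((lam j : ℂ) - (lam (j + 1) : ℂ)) *
          (if d ∈ annF nn (A j) then (Nat.card (A j) : ℂ) else 0) := by
    intro j _
    rw [TT_eq]
  rw [Finset.sum_congr rfl hTTs]
  push_cast [apply_ite (Int.cast : ℤ → ℂ)]
  ring

end Nested

section Pattern
open scoped Classical
variable {k m : ℕ} {nn : Fin k → ℕ} [∀ i, NeZero (nn i)]

/-- the integer whose value is `m²` times the squared frame angle -/
noncomputable def NvalZ (nn : Fin k → ℕ) [∀ i, NeZero (nn i)] (A : ℕ → AddSubgroup (PiG nn))
    (lam : ℕ → ℕ) (m t : ℕ) (d : PiG nn) : ℤ :=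
  (m : ℤ) - lam 1 + ∑ j ∈ Finset.Icc 1 (t - 1), ((lam j : ℤ) - lam (j + 1)) *
    (if d ∈ annF nn (A j) then (Nat.card (A j) : ℤ) else 0)

variable (g : Fin m → PiG nn) (t : ℕ) (A : ℕ → AddSubgroup (PiG nn)) (lam : ℕ → ℕ)

lemma normSq_eq_Nval' (hm : 0 < m) (hg : Function.Injective g) (ht : 1 ≤ t)
    (hnds : IsNestedDS g t (fun j => (A j : Set (PiG nn))) lam)
    {d : PiG nn} (hd : d ≠ 0) :
    Complex.normSq (∑ j, rho nn (g j) d) = ((NvalZ nn A lam m t d : ℤ) : ℝ) := by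
  have h := normSq_eq_Nval g t A lam hm hg ht hnds hd
  apply Complex.ofReal_injective
  rw [h, NvalZ]
  norm_cast

lemma Nval_nonneg (hm : 0 < m) (hg : Function.Injective g) (ht : 1 ≤ t)
    (hnds : IsNestedDS g t (fun j => (A j : Set (PiG nn))) lam)
    {d : PiG nn} (hd : d ≠ 0) : (0 : ℝ) ≤ ((NvalZ nn A lam m t d : ℤ) : ℝ) := by
  rw [← normSq_eq_Nval' g t A lam hm hg ht hnds hd]
  exact Complex.normSq_nonneg _

lemma ang_eq (hm : 0 < m) (hg : Function.Injective g) (ht : 1 ≤ t)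
    (hnds : IsNestedDS g t (fun j => (A j : Set (PiG nn))) lam)
    {x y : PiG nn} (hxy : x ≠ y) :
    ang nn g x y = Real.sqrt (((NvalZ nn A lam m t (y - x) : ℤ) : ℝ) / (m : ℝ) ^ 2) := by
  have hd : y - x ≠ 0 := sub_ne_zero.mpr (Ne.symm hxy)
  rw [ang, inner_harm g hm x y, norm_mul, norm_inv]
  have h1 : ‖((m : ℕ) : ℂ)‖ = (m : ℝ) := by simp
  have h2 : ‖∑ j, rho nn (g j) (y - x)‖
      = Real.sqrt (Complex.normSq (∑ j, rho nn (g j) (y - x))) := by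
    rw [Complex.norm_def]
  rw [h1, h2, normSq_eq_Nval' g t A lam hm hg ht hnds hd,
    Real.sqrt_div (Nval_nonneg g t A lam hm hg ht hnds hd) ((m : ℝ) ^ 2),
    Real.sqrt_sq (Nat.cast_nonneg m)]
  ring

lemma chain_le (hmono : ∀ j, j < t → (A j : Set (PiG nn)) ⊆ A (j + 1)) :
    ∀ i j, i ≤ j → j ≤ t → A i ≤ A j := by
  intro i j hij hjt
  induction j with
  | zero =>
    have : i = 0 := by omega
    subst this; exact le_rfl
  | succ j ih =>
    rcases Nat.lt_or_ge i (j + 1) with h | h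
    · refine le_trans (ih (by omega) (by omega)) ?_
      exact SetLike.coe_subset_coe.mp (hmono j (by omega))
    · have : i = j + 1 := by omega
      subst this; exact le_rfl

lemma Nval_pattern (s : ℕ) (hs1 : 1 ≤ s)
    (hsmin : ∀ j, 1 ≤ j → j < s → lam j = lam (j + 1))
    (d : PiG nn) (r : ℕ) (hr : r ≤ t - 1)
    (hpat : ∀ j, 1 ≤ j → j ≤ t - 1 → (d ∈ annF nn (A j) ↔ j ≤ r)) :
    NvalZ nn A lam m t d = (m : ℤ) - lam 1 +
      ∑ j ∈ Finset.Icc s r, ((lam j : ℤ) - lam (j + 1)) * (Nat.card (A j) : ℤ) := by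
  rw [NvalZ]
  congr 1
  have h1 : ∀ j ∈ Finset.Icc 1 (t - 1),
      ((lam j : ℤ) - lam (j + 1)) * (if d ∈ annF nn (A j) then (Nat.card (A j) : ℤ) else 0)
        = if j ≤ r then ((lam j : ℤ) - lam (j + 1)) * (Nat.card (A j) : ℤ) else 0 := by
    intro j hj
    rw [Finset.mem_Icc] at hj
    rw [if_congr (hpat j hj.1 hj.2) rfl rfl]
    split_ifs with h
    · rfl
    · exact mul_zero _
  rw [Finset.sum_congr rfl h1, ← Finset.sum_filter]
  have h2 : (Finset.Icc 1 (t - 1)).filter (· ≤ r) = Finset.Icc 1 r := by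
    ext a
    simp only [Finset.mem_filter, Finset.mem_Icc]
    omega
  rw [h2]
  refine (Finset.sum_subset (Finset.Icc_subset_Icc hs1 le_rfl) ?_).symm
  intro j hj hj'
  rw [Finset.mem_Icc] at hj
  have : j < s := by
    by_contra h
    exact hj' (Finset.mem_Icc.mpr ⟨by omega, hj.2⟩)
  rw [hsmin j hj.1 this]
  simp

lemma pattern_of_ne_zero (hmono : ∀ j, j < t → (A j : Set (PiG nn)) ⊆ A (j + 1))
    (h0 : (A 0 : Set (PiG nn)) = {0}) (ht : 1 ≤ t) (d : PiG nn) :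
    ∃ r, r ≤ t - 1 ∧ ∀ j, 1 ≤ j → j ≤ t - 1 → (d ∈ annF nn (A j) ↔ j ≤ r) := by
  set P : ℕ → Prop := fun j => d ∈ annF nn (A j) with hP
  have hP0 : P 0 := by
    show d ∈ annF nn (A 0)
    rw [mem_annF]
    intro z hz
    have : z ∈ (A 0 : Set (PiG nn)) := hz
    rw [h0, Set.mem_singleton_iff] at this
    rw [this, rho_zero_left]
  refine ⟨Nat.findGreatest P (t - 1), Nat.findGreatest_le (t - 1), ?_⟩
  intro j hj1 hj2
  constructor
  · intro hmem
    by_contra h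
    push_neg at h
    exact Nat.findGreatest_is_greatest h hj2 hmem
  · intro hjr
    have hPr : P (Nat.findGreatest P (t - 1)) := Nat.findGreatest_spec (Nat.zero_le _) hP0
    exact annF_anti (chain_le t A hmono j _ hjr
      (le_trans (Nat.findGreatest_le (t - 1)) (by omega))) hPr

lemma realize_pattern (hmono : ∀ j, j < t → (A j : Set (PiG nn)) ⊆ A (j + 1))
    (hstrict : ∀ j, j < t → A j ≠ A (j + 1)) (ht : 1 ≤ t)
    (r : ℕ) (hr : r ≤ t - 1) :
    ∃ d : PiG nn, d ≠ 0 ∧ ∀ j, 1 ≤ j → j ≤ t - 1 → (d ∈ annF nn (A j) ↔ j ≤ r) := by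
  have hrt : r < t := by omega
  obtain ⟨d, hd1, hd2⟩ := exists_ann_diff
    (SetLike.coe_subset_coe.mp (hmono r hrt)) (hstrict r hrt)
  refine ⟨d, ?_, ?_⟩
  · rintro rfl
    exact hd2 (zero_mem_annF _)
  · intro j hj1 hj2
    constructor
    · intro hmem
      by_contra h
      push_neg at h
      exact hd2 (annF_anti (chain_le t A hmono (r + 1) j h (by omega)) hmem)
    · intro hjr
      exact annF_anti (chain_le t A hmono j r hjr (by omega)) hd1

end Pattern

lemma strict_of_proper {k m : ℕ} {nn : Fin k → ℕ} [∀ i, NeZero (nn i)]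
    (g : Fin m → PiG nn) (t : ℕ) (ht : 2 ≤ t) (A : ℕ → AddSubgroup (PiG nn)) (lam : ℕ → ℕ)
    (hnds : IsNestedDS g t (fun j => (A j : Set (PiG nn))) lam)
    (hproper : ¬ ∃ (A' : ℕ → Set (PiG nn)) (lam' : ℕ → ℕ), IsNestedDS g (t - 1) A' lam') :
    ∀ j, j < t → A j ≠ A (j + 1) := by
  obtain ⟨h0, hT, hmono, hcount⟩ := hnds
  intro j hj heq
  have hSeq : (A j : Set (PiG nn)) = (A (j + 1) : Set (PiG nn)) := by rw [heq]
  apply hproper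
  refine ⟨fun i => if i ≤ j then (A i : Set (PiG nn)) else (A (i + 1) : Set (PiG nn)),
    fun i => if i ≤ j then lam i else lam (i + 1), ?_, ?_, ?_, ?_⟩
  · show (if 0 ≤ j then (A 0 : Set (PiG nn)) else (A 1 : Set (PiG nn))) = {0}
    rw [if_pos (Nat.zero_le j)]
    exact h0
  · show (if t - 1 ≤ j then (A (t-1) : Set (PiG nn)) else (A (t - 1 + 1) : Set (PiG nn)))
      = Set.univ
    by_cases hc : t - 1 ≤ j
    · rw [if_pos hc]
      have hjeq : j = t - 1 := by omega
      have h1 : t - 1 + 1 = t := by omega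
      subst hjeq
      rw [hSeq, h1]
      exact hT
    · rw [if_neg hc]
      have h1 : t - 1 + 1 = t := by omega
      rw [h1]
      exact hT
  · intro i hi
    show (if i ≤ j then (A i : Set (PiG nn)) else (A (i + 1) : Set (PiG nn)))
      ⊆ (if i + 1 ≤ j then (A (i + 1) : Set (PiG nn)) else (A (i + 2) : Set (PiG nn)))
    by_cases h1 : i + 1 ≤ j
    · rw [if_pos (by omega : i ≤ j), if_pos h1]
      exact hmono i (by omega)
    · by_cases h2 : i ≤ j
      · rw [if_pos h2, if_neg h1]
        have hij : i = j := by omega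
        subst hij
        calc (A i : Set (PiG nn)) = (A (i + 1) : Set (PiG nn)) := hSeq
          _ ⊆ (A (i + 2) : Set (PiG nn)) := hmono (i + 1) (by omega)
      · rw [if_neg h2, if_neg h1]
        exact hmono (i + 1) (by omega)
  · intro i hi x hx1 hx2
    have hx1' : x ∈ (if i + 1 ≤ j then (A (i + 1) : Set (PiG nn))
        else (A (i + 2) : Set (PiG nn))) := hx1
    have hx2' : x ∉ (if i ≤ j then (A i : Set (PiG nn))
        else (A (i + 1) : Set (PiG nn))) := hx2
    show diffCount g x = (if i + 1 ≤ j then lam (i + 1) else lam (i + 2))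
    by_cases h1 : i + 1 ≤ j
    · rw [if_pos h1] at hx1' ⊢
      rw [if_pos (by omega : i ≤ j)] at hx2'
      exact hcount i (by omega) x hx1' hx2'
    · rw [if_neg h1] at hx1' ⊢
      by_cases h2 : i ≤ j
      · have hij : i = j := by omega
        rw [if_pos h2] at hx2'
        have hx2'' : x ∉ (A (i + 1) : Set (PiG nn)) := by
          subst hij
          rw [← hSeq]
          exact hx2'
        exact hcount (i + 1) (by omega) x hx1' hx2''
      · rw [if_neg h2] at hx2'
        exact hcount (i + 1) (by omega) x hx1' hx2'

/-- Let `S = {g_1, ..., g_m}` be a proper `(n, m, t)`-nested divisible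
difference set for `G` relative to `(A, Λ)` with `t ≥ 2` (each `A j` a subgroup), and let
`s ∈ {1, ..., t-1}` be the smallest index with `Λ s ≠ Λ (s+1)`.  Set
`α₁ = √(1/m - Λ 1/m²)` and `α₂ = √(α₁² + (Λ s - Λ (s+1)) |A s| / m²)`.  If `F` is the
`G`-harmonic frame generated by `S`, then (1) `α₁` and `α₂` occur among the frame angles
of `F`, and (2) `F` is biangular iff for every `r ∈ {s+1, ..., t-1}` either
`∑_{j=s}^{r} (Λ j - Λ (j+1)) |A j| = 0` or `∑_{j=s+1}^{r} (Λ j - Λ (j+1)) |A j| = 0`. -/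
theorem statement18 {k m : ℕ} (nn : Fin k → ℕ) [∀ i, NeZero (nn i)] (hm : 0 < m)
    (g : Fin m → PiG nn) (hg : Function.Injective g)
    (t : ℕ) (ht : 2 ≤ t) (A : ℕ → AddSubgroup (PiG nn)) (lam : ℕ → ℕ)
    (hnds : IsNestedDS g t (fun j => (A j : Set (PiG nn))) lam)
    (hproper : ¬ ∃ (A' : ℕ → Set (PiG nn)) (lam' : ℕ → ℕ), IsNestedDS g (t - 1) A' lam')
    (s : ℕ) (hs1 : 1 ≤ s) (hs2 : s ≤ t - 1)
    (hs : lam s ≠ lam (s + 1))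
    (hsmin : ∀ j, 1 ≤ j → j < s → lam j = lam (j + 1)) :
    (Real.sqrt (1 / (m : ℝ) - (lam 1 : ℝ) / (m : ℝ) ^ 2) ∈ anglesSet nn g ∧
     Real.sqrt (Real.sqrt (1 / (m : ℝ) - (lam 1 : ℝ) / (m : ℝ) ^ 2) ^ 2 +
        ((lam s : ℝ) - lam (s + 1)) * (Nat.card (A s) : ℝ) / (m : ℝ) ^ 2) ∈
       anglesSet nn g) ∧
    ((anglesSet nn g).ncard = 2 ↔
      ∀ r, s + 1 ≤ r → r ≤ t - 1 →
        (∑ j ∈ Finset.Icc s r, ((lam j : ℤ) - lam (j + 1)) * (Nat.card (A j) : ℤ)) = 0 ∨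
        (∑ j ∈ Finset.Icc (s + 1) r,
            ((lam j : ℤ) - lam (j + 1)) * (Nat.card (A j) : ℤ)) = 0) := by
  classical
  have ht1 : 1 ≤ t := by omega
  have hstrict := strict_of_proper g t ht A lam hnds hproper
  set V : ℕ → ℤ := fun r => (m : ℤ) - lam 1 +
    ∑ j ∈ Finset.Icc s r, ((lam j : ℤ) - lam (j + 1)) * (Nat.card (A j) : ℤ) with hVdef
  set f : ℕ → ℝ := fun r => Real.sqrt (((V r : ℤ) : ℝ) / (m : ℝ) ^ 2) with hfdef
  have hm0 : (m : ℝ) ≠ 0 := Nat.cast_ne_zero.mpr hm.ne'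
  -- every `f r` (for `r ≤ t-1`) is a realized frame angle, and `V r` is nonnegative
  have key1 : ∀ r, r ≤ t - 1 → f r ∈ anglesSet nn g ∧ (0 : ℝ) ≤ ((V r : ℤ) : ℝ) := by
    intro r hr
    obtain ⟨d, hd0, hpat⟩ := realize_pattern t A hnds.2.2.1 hstrict ht1 r hr
    have hplug : NvalZ nn A lam m t d = V r :=
      Nval_pattern t A lam s hs1 hsmin d r hr hpat
    have hang : ang nn g 0 d = f r := by
      rw [ang_eq g t A lam hm hg ht1 hnds (Ne.symm hd0 : (0 : PiG nn) ≠ d), sub_zero, hplug]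
    refine ⟨⟨0, d, Ne.symm hd0, hang⟩, ?_⟩
    rw [← hplug]
    exact Nval_nonneg g t A lam hm hg ht1 hnds hd0
  -- every frame angle is some `f r`
  have hsub : ∀ a ∈ anglesSet nn g, ∃ r, r ≤ t - 1 ∧ a = f r := by
    rintro a ⟨x, y, hxy, rfl⟩
    have hd : y - x ≠ 0 := sub_ne_zero.mpr (Ne.symm hxy)
    obtain ⟨r, hr, hpat⟩ := pattern_of_ne_zero t A hnds.2.2.1 hnds.1 ht1 (y - x)
    refine ⟨r, hr, ?_⟩
    rw [ang_eq g t A lam hm hg ht1 hnds hxy,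
      Nval_pattern t A lam s hs1 hsmin _ r hr hpat]
  have hV0 : V 0 = (m : ℤ) - lam 1 := by
    rw [hVdef]
    simp [Finset.Icc_eq_empty (by omega : ¬ s ≤ 0)]
  have hVs : V s = (m : ℤ) - lam 1 + ((lam s : ℤ) - lam (s + 1)) * (Nat.card (A s) : ℤ) := by
    rw [hVdef]
    simp [Finset.Icc_self]
  have hfeq : ∀ a b, V a = V b → f a = f b := by
    intro a b h
    show Real.sqrt (((V a : ℤ) : ℝ) / (m : ℝ) ^ 2) = Real.sqrt (((V b : ℤ) : ℝ) / (m : ℝ) ^ 2)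
    rw [h]
  have hVbody : ∀ r, V r = (m : ℤ) - lam 1 +
      ∑ j ∈ Finset.Icc s r, ((lam j : ℤ) - lam (j + 1)) * (Nat.card (A j) : ℤ) := fun r => rfl
  have hsplit : ∀ r, s ≤ r → V r = V s +
      ∑ j ∈ Finset.Icc (s + 1) r, ((lam j : ℤ) - lam (j + 1)) * (Nat.card (A j) : ℤ) := by
    intro r hrs
    have hins : Finset.Icc s r = insert s (Finset.Icc (s + 1) r) := by
      ext a
      simp only [Finset.mem_Icc, Finset.mem_insert]
      omega
    have h1 := hVbody r
    rw [hins, Finset.sum_insert (by simp)] at h1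
    rw [h1, hVs]
    ring
  have hcardpos : 0 < Nat.card (A s) := Nat.card_pos
  have hVne : V s ≠ V 0 := by
    rw [hVs, hV0]
    intro h
    have h2 : ((lam s : ℤ) - lam (s + 1)) * (Nat.card (A s) : ℤ) = 0 := by linarith
    rcases mul_eq_zero.mp h2 with h3 | h3
    · exact hs (by exact_mod_cast sub_eq_zero.mp h3)
    · exact hcardpos.ne' (by exact_mod_cast h3)
  have hVnonneg : ∀ r, r ≤ t - 1 → (0 : ℝ) ≤ ((V r : ℤ) : ℝ) := fun r hr => (key1 r hr).2
  have hfinj : ∀ a b, a ≤ t - 1 → b ≤ t - 1 → f a = f b → V a = V b := by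
    intro a b ha hb hfe
    rw [hfdef] at hfe
    simp only at hfe
    have h := (Real.sqrt_inj (div_nonneg (hVnonneg a ha) (sq_nonneg _))
      (div_nonneg (hVnonneg b hb) (sq_nonneg _))).mp hfe
    have h2 : ((V a : ℤ) : ℝ) = ((V b : ℤ) : ℝ) := by
      field_simp at h
      exact_mod_cast h
    exact_mod_cast h2
  have hf0s : f 0 ≠ f s := fun h => hVne ((hfinj 0 s (by omega) hs2 h).symm)
  have halpha1 : Real.sqrt (1 / (m : ℝ) - (lam 1 : ℝ) / (m : ℝ) ^ 2) = f 0 := by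
    rw [hfdef]
    simp only
    congr 1
    rw [hV0]
    push_cast
    field_simp
  have hpairsub : ({f 0, f s} : Set ℝ) ⊆ anglesSet nn g := by
    rintro a (rfl | rfl)
    · exact (key1 0 (by omega)).1
    · exact (key1 s hs2).1
  constructor
  · constructor
    · rw [halpha1]
      exact (key1 0 (by omega)).1
    · have hsq : Real.sqrt (1 / (m : ℝ) - (lam 1 : ℝ) / (m : ℝ) ^ 2) ^ 2
          = 1 / (m : ℝ) - (lam 1 : ℝ) / (m : ℝ) ^ 2 := by
        apply Real.sq_sqrt
        have : 1 / (m : ℝ) - (lam 1 : ℝ) / (m : ℝ) ^ 2 = ((V 0 : ℤ) : ℝ) / (m : ℝ) ^ 2 := by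
          rw [hV0]
          push_cast
          field_simp
        rw [this]
        exact div_nonneg (hVnonneg 0 (by omega)) (sq_nonneg _)
      have he2 : Real.sqrt (Real.sqrt (1 / (m : ℝ) - (lam 1 : ℝ) / (m : ℝ) ^ 2) ^ 2 +
          ((lam s : ℝ) - lam (s + 1)) * (Nat.card (A s) : ℝ) / (m : ℝ) ^ 2) = f s := by
        rw [hsq, hfdef]
        simp only
        congr 1
        rw [hVs]
        push_cast
        field_simp
      rw [he2]
      exact (key1 s hs2).1
  · constructor
    · intro hcard r hr1 hr2
      have hfin : (anglesSet nn g).Finite := by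
        apply Set.Finite.subset ((Set.finite_Iic (t - 1)).image f)
        intro a ha
        obtain ⟨r', hr', rfl⟩ := hsub a ha
        exact ⟨r', hr', rfl⟩
      have hpair_eq : ({f 0, f s} : Set ℝ) = anglesSet nn g :=
        Set.eq_of_subset_of_ncard_le hpairsub
          (by rw [hcard, Set.ncard_pair hf0s]) hfin
      have hfr : f r ∈ ({f 0, f s} : Set ℝ) := by
        rw [hpair_eq]
        exact (key1 r hr2).1
      have hVr : V r = V 0 +
          ∑ j ∈ Finset.Icc s r, ((lam j : ℤ) - lam (j + 1)) * (Nat.card (A j) : ℤ) := by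
        rw [hV0]
      rcases hfr with h | h
      · left
        have hV := hfinj r 0 hr2 (by omega) h
        linarith [hVr, hV]
      · right
        have hV := hfinj r s hr2 hs2 h
        have hsp := hsplit r (by omega)
        linarith
    · intro hcond
      have heq : anglesSet nn g = ({f 0, f s} : Set ℝ) := by
        apply Set.Subset.antisymm
        · intro a ha
          obtain ⟨r, hr, rfl⟩ := hsub a ha
          rcases Nat.lt_or_ge r s with h | h
          · left
            have hVr : V r = V 0 := by
              rw [hV0]
              rw [hVbody r, Finset.Icc_eq_empty (by omega : ¬ s ≤ r)]
              simp
            exact hfeq r 0 hVr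
          · rcases Nat.eq_or_lt_of_le h with h' | h'
            · right
              rw [Set.mem_singleton_iff]
              exact hfeq r s (by rw [h'])
            · have hVr : V r = V 0 +
                  ∑ j ∈ Finset.Icc s r, ((lam j : ℤ) - lam (j + 1)) * (Nat.card (A j) : ℤ) := by
                rw [hV0]
              rcases hcond r (by omega) hr with h1 | h1
              · left
                have : V r = V 0 := by rw [hVr, h1]; ring
                exact hfeq r 0 this
              · right
                rw [Set.mem_singleton_iff]
                have : V r = V s := by rw [hsplit r (by omega), h1]; ring
                exact hfeq r s this
        · exact hpairsub
      rw [heq, Set.ncard_pair hf0s]
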